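/- Consider the hardmax platform game with N = 2 platforms, M = 3 models, and three user types θ_A, θ_B, θ_C each of weight 1/3, with scores S_1(θ_A)=1/5, S_1(θ_B)=0, S_1(θ_C)=1/10; S_2(θ_A)=1/10, S_2(θ_B)=1/5, S_2(θ_C)=0; S_3(θ_A)=0, S_3(θ_B)=1/10, S_3(θ_C)=1/5. Then no strategy profile (f_1, f_2) ∈ {1,2,3}² is a pure Nash equilibrium. -/

import Mathlib

open Finset

noncomputable section

/-- `𝔸_f(θ)`: the set of platforms attaining the maximal score for user type `θ`
under the strategy profile `f`. -/
def attains {Θ : Type*} [Fintype Θ] {M N : ℕ} (S : Fin M → Θ → ℝ)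
    (f : Fin N → Fin M) (θ : Θ) : Finset (Fin N) :=
  Finset.univ.filter fun i => ∀ k : Fin N, S (f k) θ ≤ S (f i) θ

/-- Hardmax user-choice probability `p_i(θ; f)`. -/
def hardP {Θ : Type*} [Fintype Θ] {M N : ℕ} (S : Fin M → Θ → ℝ)
    (f : Fin N → Fin M) (θ : Θ) (i : Fin N) : ℝ :=
  if i ∈ attains S f θ then 1 / (attains S f θ).card else 0

/-- Platform `i`'s utility `U_i(f)` in the hardmax platform game. -/
def util {Θ : Type*} [Fintype Θ] {M N : ℕ} (π : Θ → ℝ) (S : Fin M → Θ → ℝ)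
    (f : Fin N → Fin M) (i : Fin N) : ℝ :=
  ∑ θ, π θ * hardP S f θ i * S (f i) θ

/-- Pure Nash equilibrium of the hardmax platform game: no platform can
improve its utility by unilaterally deviating. -/
def IsPNE {Θ : Type*} [Fintype Θ] {M N : ℕ} (π : Θ → ℝ) (S : Fin M → Θ → ℝ)
    (f : Fin N → Fin M) : Prop :=
  ∀ (i : Fin N) (m : Fin M), util π S (Function.update f i m) i ≤ util π S f i

/-- In the hardmax platform game with `N = 2` platforms, `M = 3` models,
three user types of weight `1/3` each, and the given scores, no strategy profile
is a pure Nash equilibrium. -/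
theorem stmt0 :
    ∀ f : Fin 2 → Fin 3,
      ¬ IsPNE (fun _ : Fin 3 => (1 : ℝ) / 3)
        (![![1/5, 0, 1/10], ![1/10, 1/5, 0], ![0, 1/10, 1/5]] : Fin 3 → Fin 3 → ℝ) f := by
  intro f hf
  have huniv : (Finset.univ : Finset (Fin 2)) = {0, 1} := rfl
  have hf2 : f = ![f 0, f 1] := by funext i; fin_cases i <;> rfl
  have h0 : f 0 = 0 ∨ f 0 = 1 ∨ f 0 = 2 := by omega
  have h1 : f 1 = 0 ∨ f 1 = 1 ∨ f 1 = 2 := by omega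
  rw [hf2] at hf
  rcases h0 with h0 | h0 | h0 <;> rcases h1 with h1 | h1 | h1 <;> rw [h0, h1] at hf
  · have key := hf 0 1
    norm_num [util, hardP, attains, Function.update, Fin.sum_univ_succ, Fin.forall_fin_two,
      Finset.filter_insert, Finset.filter_singleton, huniv, Finset.mem_insert, Finset.card_filter, Matrix.cons_val_two, Matrix.vecHead, Matrix.vecTail] at key
  · have key := hf 1 2
    norm_num [util, hardP, attains, Function.update, Fin.sum_univ_succ, Fin.forall_fin_two,
      Finset.filter_insert, Finset.filter_singleton, huniv, Finset.mem_insert, Finset.card_filter, Matrix.cons_val_two, Matrix.vecHead, Matrix.vecTail] at key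
  · have key := hf 0 1
    norm_num [util, hardP, attains, Function.update, Fin.sum_univ_succ, Fin.forall_fin_two,
      Finset.filter_insert, Finset.filter_singleton, huniv, Finset.mem_insert, Finset.card_filter, Matrix.cons_val_two, Matrix.vecHead, Matrix.vecTail] at key
  · have key := hf 0 2
    norm_num [util, hardP, attains, Function.update, Fin.sum_univ_succ, Fin.forall_fin_two,
      Finset.filter_insert, Finset.filter_singleton, huniv, Finset.mem_insert, Finset.card_filter, Matrix.cons_val_two, Matrix.vecHead, Matrix.vecTail] at key
  · have key := hf 0 0
    norm_num [util, hardP, attains, Function.update, Fin.sum_univ_succ, Fin.forall_fin_two,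
      Finset.filter_insert, Finset.filter_singleton, huniv, Finset.mem_insert, Finset.card_filter, Matrix.cons_val_two, Matrix.vecHead, Matrix.vecTail] at key
  · have key := hf 1 0
    norm_num [util, hardP, attains, Function.update, Fin.sum_univ_succ, Fin.forall_fin_two,
      Finset.filter_insert, Finset.filter_singleton, huniv, Finset.mem_insert, Finset.card_filter, Matrix.cons_val_two, Matrix.vecHead, Matrix.vecTail] at key
  · have key := hf 1 1
    norm_num [util, hardP, attains, Function.update, Fin.sum_univ_succ, Fin.forall_fin_two,
      Finset.filter_insert, Finset.filter_singleton, huniv, Finset.mem_insert, Finset.card_filter, Matrix.cons_val_two, Matrix.vecHead, Matrix.vecTail] at key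
  · have key := hf 0 0
    norm_num [util, hardP, attains, Function.update, Fin.sum_univ_succ, Fin.forall_fin_two,
      Finset.filter_insert, Finset.filter_singleton, huniv, Finset.mem_insert, Finset.card_filter, Matrix.cons_val_two, Matrix.vecHead, Matrix.vecTail] at key
  · have key := hf 0 0
    norm_num [util, hardP, attains, Function.update, Fin.sum_univ_succ, Fin.forall_fin_two,
      Finset.filter_insert, Finset.filter_singleton, huniv, Finset.mem_insert, Finset.card_filter, Matrix.cons_val_two, Matrix.vecHead, Matrix.vecTail] at key
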